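/- For every natural number n, L_0·F_n = (b/a)^{ε(n)}·L_n, where F is the bi-periodic Fibonacci matrix sequence, L is the bi-periodic Lucas matrix sequence, and ε(n) = 1 if n is odd, 0 if n is even. -/

import Mathlib

theorem stmt_8 (a b : ℝ) (ha : a ≠ 0) (hb : b ≠ 0)
  (F : ℕ → Matrix (Fin 2) (Fin 2) ℝ) (hF0 : F 0 = 1) (hF1 : F 1 = !![b, b/a; 1, 0])
  (hF : ∀ n : ℕ, F (n + 2) = if Even (n + 2) then a • F (n + 1) + F n else b • F (n + 1) + F n)
  (L : ℕ → Matrix (Fin 2) (Fin 2) ℝ) (hL0 : L 0 = !![a, 2; 2*a/b, -a])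
  (hL1 : L 1 = !![a^2 + 2*a/b, a; a^2/b, 2*a/b])
  (hL : ∀ n : ℕ, L (n + 2) = if Odd (n + 2) then a • L (n + 1) + L n else b • L (n + 1) + L n) :
    ∀ n : ℕ, L 0 * F n = (b/a) ^ (if Odd n then 1 else 0) • L n := by
  intro n
  induction n using Nat.twoStepInduction with
  | zero => simp [hF0]
  | one =>
      rw [hF1, hL0, hL1]
      norm_num
      refine ⟨⟨?_, ?_⟩, ?_, ?_⟩ <;> field_simp <;> ring
  | more n ihn ihn1 =>
      rcases Nat.even_or_odd n with he | ho
      · -- n even, n+2 even, n+1 odd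
        have h2 : Even (n + 2) := by simpa using he.add (by norm_num)
        have h1 : Odd (n + 1) := Even.add_one he
        have hno : ¬ Odd n := by simpa [Nat.not_odd_iff_even] using he
        have hno2 : ¬ Odd (n + 2) := by simpa [Nat.not_odd_iff_even] using h2
        rw [hF n, hL n, if_pos h2, if_neg hno2, Matrix.mul_add, Matrix.mul_smul,
          ihn, ihn1, if_pos h1, if_neg hno, if_neg hno2]
        rw [pow_one, pow_zero, one_smul, one_smul, smul_smul]
        rw [mul_div_cancel₀ _ ha]
      · -- n odd, n+2 odd, n+1 even
        have h2 : Odd (n + 2) := by simpa using ho.add_even (by norm_num)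
        have h1 : ¬ Odd (n + 1) := by simp [Nat.odd_add_one, Nat.not_even_iff_odd, ho]
        have h2e : ¬ Even (n + 2) := by simpa [Nat.not_even_iff_odd] using h2
        rw [hF n, hL n, if_neg h2e, if_pos h2, Matrix.mul_add, Matrix.mul_smul,
          ihn, ihn1, if_pos ho, if_neg h1, if_pos h2]
        rw [pow_one, pow_zero, one_smul, smul_add, smul_smul, div_mul_cancel₀ _ ha]
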